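/- Let B_0 be an exponential CBF with rate β ∈ (0,1), let α = 1/β, and define B_k(x) as the minimum over input sequences in U^k of max{ max_{0 ≤ t ≤ k-1} α^t h(x_t), α^k B_0(x_k) } with x_0 = x, x_{t+1} = f(x_t,u_t). Then for every x with B_k(x) ≤ 0 there exists u ∈ U such that B_k(f(x,u)) ≤ β B_k(x), i.e., B_k is an exponential CBF with the same rate β. -/

import Mathlib

/-- Closed-loop trajectory: x_0 = x, x_{t+1} = f(x_t, u_t). -/
def traj {σ υ : Type*} (f : σ → υ → σ) (x : σ) (u : ℕ → υ) : ℕ → σ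
  | 0 => x
  | t + 1 => f (traj f x u t) (u t)

/-- Cost max{ max_{0 ≤ t ≤ k-1} α^t h(x_t), α^k B_0(x_k) }. -/
noncomputable def reachCostExp {σ υ : Type*} (f : σ → υ → σ) (h B0 : σ → ℝ)
    (α : ℝ) (k : ℕ) (x : σ) (u : ℕ → υ) : ℝ :=
  max (⨆ t : Fin k, α ^ (t : ℕ) * h (traj f x u t)) (α ^ k * B0 (traj f x u k))

/-- if B_0 is an exponential CBF with rate β ∈ (0,1) and
α = 1/β, then B_k (the attained minimum of the reachability cost) satisfies:
for every x with B_k(x) ≤ 0 there exists u ∈ U with B_k(f(x,u)) ≤ β B_k(x). -/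
theorem reachability_generates_exponential_cbf
    {σ υ : Type*} (f : σ → υ → σ) (h : σ → ℝ) (U : Set υ) (B0 : σ → ℝ)
    (β : ℝ) (hβ : β ∈ Set.Ioo (0 : ℝ) 1) (α : ℝ) (hα : α = 1 / β)
    (k : ℕ) (hk : 1 ≤ k)
    -- B_0 is an exponential CBF with rate β:
    (hSB0_ne : {x : σ | B0 x ≤ 0}.Nonempty)
    (hSB0_bound : ∀ x, B0 x ≤ 0 → h x ≤ B0 x)
    (hSB0_feas : ∀ x, B0 x ≤ 0 → ∃ u ∈ U, B0 (f x u) ≤ β * B0 x)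
    -- B_k is the attained minimum of the reachability cost:
    (Bk : σ → ℝ)
    (hBk_att : ∀ x : σ, ∃ u : ℕ → υ, (∀ t, u t ∈ U) ∧
      Bk x = reachCostExp f h B0 α k x u)
    (hBk_lb : ∀ (x : σ) (u : ℕ → υ), (∀ t, u t ∈ U) →
      Bk x ≤ reachCostExp f h B0 α k x u) :
    ∀ x, Bk x ≤ 0 → ∃ u ∈ U, Bk (f x u) ≤ β * Bk x := by
  intro x hx
  obtain ⟨hβ0, hβ1⟩ := hβ
  have hα0 : 0 < α := by rw [hα]; positivity
  have hβα : β * α = 1 := by rw [hα]; field_simp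
  obtain ⟨u, hu, hBx⟩ := hBk_att x
  haveI : Nonempty (Fin k) := ⟨⟨0, hk⟩⟩
  have hterm : ∀ t : Fin k, α ^ (t : ℕ) * h (traj f x u t) ≤ Bk x := by
    intro t
    rw [hBx]
    exact le_trans (le_ciSup (f := fun t : Fin k => α ^ (t : ℕ) * h (traj f x u t))
      (Set.Finite.bddAbove (Set.finite_range _)) t) (le_max_left _ _)
  have hB0term : α ^ k * B0 (traj f x u k) ≤ Bk x := by
    rw [hBx]; exact le_max_right _ _
  have hαk : 0 < α ^ k := pow_pos hα0 k
  have hB0xk : B0 (traj f x u k) ≤ 0 := by nlinarith [hB0term.trans hx]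
  obtain ⟨u', hu'U, hu'⟩ := hSB0_feas _ hB0xk
  refine ⟨u 0, hu 0, ?_⟩
  set v : ℕ → υ := fun t => if t < k - 1 then u (t + 1) else u' with hv
  have hvU : ∀ t, v t ∈ U := by
    intro t; simp only [hv]; split
    · exact hu _
    · exact hu'U
  have htraj : ∀ t, t ≤ k - 1 → traj f (f x (u 0)) v t = traj f x u (t + 1) := by
    intro t
    induction t with
    | zero => intro _; rfl
    | succ n ih =>
      intro hn
      have hn' : n < k - 1 := lt_of_lt_of_le (Nat.lt_succ_self n) hn
      have hvn : v n = u (n + 1) := if_pos hn'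
      simp only [traj, ih (le_of_lt hn'), hvn]
  have htrajk : traj f (f x (u 0)) v k = f (traj f x u k) u' := by
    have hk1 : k = (k - 1) + 1 := (Nat.succ_pred_eq_of_pos hk).symm
    rw [hk1]
    simp only [traj, htraj (k - 1) le_rfl, hv, if_neg (lt_irrefl (k - 1)), ← hk1]
    exact congrArg (fun y => f y u') (htraj (k - 1) le_rfl)
  have hpow : ∀ m : ℕ, α ^ m = β * α ^ (m + 1) := by
    intro m; rw [pow_succ', ← mul_assoc, hβα, one_mul]
  have key : reachCostExp f h B0 α k (f x (u 0)) v ≤ β * Bk x := by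
    unfold reachCostExp
    apply max_le
    · apply ciSup_le
      intro t
      rcases lt_or_eq_of_le (Nat.le_pred_of_lt t.2) with hlt | heq
      · -- t < k - 1
        have ht1 : (t : ℕ) + 1 < k := by have := t.2; have hp : k.pred = k - 1 := Nat.pred_eq_sub_one; omega
        have := hterm ⟨(t : ℕ) + 1, ht1⟩
        simp only at this
        rw [htraj t (le_of_lt hlt)]
        rw [hpow (t : ℕ), mul_assoc]
        exact mul_le_mul_of_nonneg_left this (le_of_lt hβ0)
      · -- t = k - 1
        rw [htraj t (le_of_eq heq)]
        have ht1 : (t : ℕ) + 1 = k := by have := t.2; have hp : k.pred = k - 1 := Nat.pred_eq_sub_one; omega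
        rw [ht1]
        have h1 : h (traj f x u k) ≤ B0 (traj f x u k) := hSB0_bound _ hB0xk
        rw [hpow (t : ℕ), ht1, mul_assoc]
        have : α ^ k * h (traj f x u k) ≤ α ^ k * B0 (traj f x u k) :=
          mul_le_mul_of_nonneg_left h1 (le_of_lt hαk)
        exact mul_le_mul_of_nonneg_left (this.trans hB0term) (le_of_lt hβ0)
    · rw [htrajk]
      have h1 : α ^ k * B0 (f (traj f x u k) u') ≤ α ^ k * (β * B0 (traj f x u k)) :=
        mul_le_mul_of_nonneg_left hu' (le_of_lt hαk)
      have h2 : α ^ k * (β * B0 (traj f x u k)) = β * (α ^ k * B0 (traj f x u k)) := by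
        ring
      rw [h2] at h1
      exact h1.trans (mul_le_mul_of_nonneg_left hB0term (le_of_lt hβ0))
  exact (hBk_lb _ v hvU).trans key
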